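/- Let w : ℝⁿ → ℝ be a differentiable choice welfare function (monotone, translation invariant, convex) that is superlinear. Then the gradient map ∇w spans the interior of the simplex: for every x ∈ ℝⁿ with xᵢ > 0 for all i and Σᵢ xᵢ = 1, there exists μ ∈ ℝⁿ such that ∇w(μ) = x. -/

import Mathlib

open scoped BigOperators
open MeasureTheory

noncomputable section

/-- The simplex Δ_{n-1} in ℝⁿ. -/
def choiceSimplex (n : ℕ) : Set (Fin n → ℝ) :=
  {x | (∀ i, 0 ≤ x i) ∧ ∑ i, x i = 1}

/-- A choice welfare function: monotone, translation invariant, convex. -/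
def IsCWF {n : ℕ} (w : (Fin n → ℝ) → ℝ) : Prop :=
  (∀ μ₁ μ₂ : Fin n → ℝ, μ₂ ≤ μ₁ → w μ₂ ≤ w μ₁) ∧
  (∀ (μ : Fin n → ℝ) (t : ℝ), w (μ + fun _ => t) = w μ + t) ∧
  ConvexOn ℝ Set.univ w

/-- The gradient of w at μ, whose i-th component is the partial derivative ∂w/∂μᵢ. -/
def grad {n : ℕ} (w : (Fin n → ℝ) → ℝ) (μ : Fin n → ℝ) : Fin n → ℝ :=
  fun i => fderiv ℝ w μ (Pi.single i 1)

set_option maxHeartbeats 1000000 in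
theorem stmt_8 (n : ℕ) (hn : 1 ≤ n) (w : (Fin n → ℝ) → ℝ)
    (hw : IsCWF w) (hdiff : Differentiable ℝ w)
    (b : Fin n → ℝ) (hb : ∀ (μ : Fin n → ℝ) (i : Fin n), μ i + b i ≤ w μ) :
    ∀ x : Fin n → ℝ, (∀ i, 0 < x i) → ∑ i, x i = 1 →
      ∃ μ : Fin n → ℝ, grad w μ = x := by
  intro x hx hsum
  haveI : Nonempty (Fin n) := ⟨⟨0, hn⟩⟩
  have hne : (Finset.univ : Finset (Fin n)).Nonempty := Finset.univ_nonempty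
  have hnpos : (0 : ℝ) < n := by exact_mod_cast hn
  -- the linear functional μ ↦ ∑ x i * μ i
  set L : (Fin n → ℝ) →L[ℝ] ℝ := ∑ i, x i • ContinuousLinearMap.proj i with hLdef
  have hL : ∀ μ : Fin n → ℝ, L μ = ∑ i, x i * μ i := by
    intro μ
    simp [hLdef, ContinuousLinearMap.sum_apply, ContinuousLinearMap.smul_apply,
      ContinuousLinearMap.proj_apply, smul_eq_mul]
  set f : (Fin n → ℝ) → ℝ := fun μ => w μ - L μ with hfdef
  have hfd : Differentiable ℝ f := hdiff.sub L.differentiable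
  have hfderiv : ∀ μ u : Fin n → ℝ, fderiv ℝ f μ u = fderiv ℝ w μ u - L u := by
    intro μ u
    have h : fderiv ℝ f μ = fderiv ℝ w μ - L := by
      rw [hfdef]
      rw [fderiv_fun_sub (hdiff μ) L.differentiableAt, L.fderiv]
    rw [h]; rfl
  set ε := Finset.univ.inf' hne x with hεdef
  have hε : 0 < ε := by
    rw [hεdef, Finset.lt_inf'_iff]
    exact fun i _ => hx i
  set bmin := Finset.univ.inf' hne b with hbmindef
  -- coercivity on the hyperplane ∑ μ = 0
  have hcoer : ∀ μ : Fin n → ℝ, (∑ i, μ i) = 0 → bmin + ε * ‖μ‖ ≤ f μ := by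
    intro μ hμ
    obtain ⟨i0, _, hi0⟩ := Finset.exists_max_image Finset.univ μ hne
    obtain ⟨j0, _, hj0⟩ := Finset.exists_min_image Finset.univ μ hne
    have hMm : ∀ i, μ i ≤ μ i0 := fun i => hi0 i (Finset.mem_univ i)
    have hmM : ∀ i, μ j0 ≤ μ i := fun i => hj0 i (Finset.mem_univ i)
    have hM0 : 0 ≤ μ i0 := by
      have h1 : ∑ i, μ i ≤ ∑ _i : Fin n, μ i0 :=
        Finset.sum_le_sum fun i _ => hMm i
      rw [hμ, Finset.sum_const, Finset.card_univ, Fintype.card_fin, nsmul_eq_mul] at h1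
      nlinarith
    have hm0 : μ j0 ≤ 0 := by
      have h1 : ∑ _i : Fin n, μ j0 ≤ ∑ i, μ i :=
        Finset.sum_le_sum fun i _ => hmM i
      rw [hμ, Finset.sum_const, Finset.card_univ, Fintype.card_fin, nsmul_eq_mul] at h1
      nlinarith
    have hnorm : ‖μ‖ ≤ μ i0 - μ j0 := by
      refine (pi_norm_le_iff_of_nonneg (by linarith)).mpr fun i => ?_
      rw [Real.norm_eq_abs, abs_le]
      constructor <;> [linarith [hmM i]; linarith [hMm i]]
    -- sum bound: ∑ x i * μ i ≤ μ i0 - ε * (μ i0 - μ j0)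
    have hsb : ∑ i, x i * μ i ≤ μ i0 - ε * (μ i0 - μ j0) := by
      have h2 : x j0 * μ j0 + ∑ i ∈ Finset.univ.erase j0, x i * μ i = ∑ i, x i * μ i :=
        Finset.add_sum_erase Finset.univ (fun i => x i * μ i) (Finset.mem_univ j0)
      have h1 : ∑ i ∈ Finset.univ.erase j0, x i * μ i
          ≤ (∑ i ∈ Finset.univ.erase j0, x i) * μ i0 := by
        rw [Finset.sum_mul]
        exact Finset.sum_le_sum fun i _ => mul_le_mul_of_nonneg_left (hMm i) (hx i).le
      have h3 : x j0 + ∑ i ∈ Finset.univ.erase j0, x i = 1 := by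
        rw [Finset.add_sum_erase _ _ (Finset.mem_univ j0)]; exact hsum
      have h4 : ε ≤ x j0 := Finset.inf'_le _ (Finset.mem_univ j0)
      nlinarith [hx j0, hMm j0]
    have h5 : μ i0 + b i0 ≤ w μ := hb μ i0
    have h6 : bmin ≤ b i0 := Finset.inf'_le _ (Finset.mem_univ i0)
    have h7 : ε * ‖μ‖ ≤ ε * (μ i0 - μ j0) := mul_le_mul_of_nonneg_left hnorm hε.le
    have h8 : f μ = w μ - ∑ i, x i * μ i := by rw [hfdef]; simp [hL]
    linarith
  -- the compact set
  set R : ℝ := max 0 ((f 0 - bmin + 1) / ε) with hRdef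
  have hR0 : 0 ≤ R := le_max_left _ _
  have hHclosed : IsClosed {μ : Fin n → ℝ | ∑ i, μ i = 0} :=
    isClosed_eq (continuous_finset_sum _ fun i _ => continuous_apply i) continuous_const
  set K := Metric.closedBall (0 : Fin n → ℝ) R ∩ {μ : Fin n → ℝ | ∑ i, μ i = 0} with hKdef
  have hKc : IsCompact K := (isCompact_closedBall _ _).inter_right hHclosed
  have h0K : (0 : Fin n → ℝ) ∈ K := ⟨Metric.mem_closedBall_self hR0, by simp⟩
  obtain ⟨μ₀, hμ₀K, hmin⟩ := hKc.exists_isMinOn ⟨0, h0K⟩ hfd.continuous.continuousOn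
  have hμ₀H : ∑ i, μ₀ i = 0 := hμ₀K.2
  -- global minimality on the hyperplane
  have hglob : ∀ μ : Fin n → ℝ, (∑ i, μ i = 0) → f μ₀ ≤ f μ := by
    intro μ hμ
    by_cases hc : ‖μ‖ ≤ R
    · exact hmin ⟨by simpa [Metric.mem_closedBall, dist_zero_right] using hc, hμ⟩
    · push_neg at hc
      have h1 := hcoer μ hμ
      have h2 : f μ₀ ≤ f 0 := hmin h0K
      have h3 : (f 0 - bmin + 1) / ε ≤ R := le_max_right _ _
      rw [div_le_iff₀ hε] at h3
      nlinarith
  -- directional derivatives vanish along the hyperplane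
  have hdirzero : ∀ v : Fin n → ℝ, (∑ i, v i = 0) → fderiv ℝ f μ₀ v = 0 := by
    intro v hv
    have hline : ∀ t : ℝ, ∑ i, (μ₀ + t • v) i = 0 := by
      intro t
      simp only [Pi.add_apply, Pi.smul_apply, smul_eq_mul, Finset.sum_add_distrib,
        ← Finset.mul_sum, hμ₀H, hv, mul_zero, add_zero]
    have hg : HasDerivAt (fun t : ℝ => f (μ₀ + t • v)) (fderiv ℝ f μ₀ v) 0 := by
      have h1 : HasDerivAt (fun t : ℝ => μ₀ + t • v) v 0 := by
        simpa using ((hasDerivAt_id (0 : ℝ)).smul_const v).const_add μ₀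
      have h2 : HasFDerivAt f (fderiv ℝ f μ₀) (μ₀ + (0 : ℝ) • v) := by
        simpa using (hfd μ₀).hasFDerivAt
      exact h2.comp_hasDerivAt 0 h1
    have hlm : IsLocalMin (fun t : ℝ => f (μ₀ + t • v)) 0 :=
      Filter.Eventually.of_forall fun t => by
        simpa using hglob _ (hline t)
    have := hlm.deriv_eq_zero
    rwa [hg.deriv] at this
  -- derivative in the direction of the all-ones vector
  have heder : fderiv ℝ w μ₀ (fun _ => (1 : ℝ)) = 1 := by
    have h1 : HasDerivAt (fun t : ℝ => μ₀ + t • (fun _ => (1 : ℝ) : Fin n → ℝ))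
        (fun _ => (1 : ℝ)) 0 := by
      simpa using ((hasDerivAt_id (0 : ℝ)).smul_const (fun _ => (1 : ℝ) : Fin n → ℝ)).const_add μ₀
    have h2 : HasFDerivAt w (fderiv ℝ w μ₀) (μ₀ + (0 : ℝ) • (fun _ => (1 : ℝ) : Fin n → ℝ)) := by
      simpa using (hdiff μ₀).hasFDerivAt
    have h3 : HasDerivAt (fun t : ℝ => w (μ₀ + t • (fun _ => (1 : ℝ) : Fin n → ℝ)))
        (fderiv ℝ w μ₀ (fun _ => (1 : ℝ))) 0 := by
      exact h2.comp_hasDerivAt 0 h1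
    have h4 : (fun t : ℝ => w (μ₀ + t • (fun _ => (1 : ℝ) : Fin n → ℝ))) = fun t => w μ₀ + t := by
      funext t
      have he : (t • (fun _ => (1 : ℝ) : Fin n → ℝ)) = fun _ => t := by
        funext i; simp
      rw [he, hw.2.1]
    rw [h4] at h3
    have h5 : HasDerivAt (fun t : ℝ => w μ₀ + t) 1 0 := (hasDerivAt_id (0 : ℝ)).const_add _
    exact h3.unique h5
  have hfe : fderiv ℝ f μ₀ (fun _ => (1 : ℝ)) = 0 := by
    rw [hfderiv, heder, hL]
    simp [hsum]
  -- all directional derivatives vanish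
  have hall : ∀ u : Fin n → ℝ, fderiv ℝ f μ₀ u = 0 := by
    intro u
    set c := (∑ i, u i) / n with hcdef
    have hv : ∑ i, (u - c • (fun _ => (1 : ℝ) : Fin n → ℝ)) i = 0 := by
      simp only [Pi.sub_apply, Pi.smul_apply, smul_eq_mul, mul_one, Finset.sum_sub_distrib,
        Finset.sum_const, Finset.card_univ, Fintype.card_fin, nsmul_eq_mul, hcdef]
      field_simp
      ring
    have hdec : u = (u - c • (fun _ => (1 : ℝ) : Fin n → ℝ)) + c • (fun _ => (1 : ℝ) : Fin n → ℝ) := by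
      abel
    calc fderiv ℝ f μ₀ u
        = fderiv ℝ f μ₀ ((u - c • (fun _ => (1 : ℝ) : Fin n → ℝ))
            + c • (fun _ => (1 : ℝ) : Fin n → ℝ)) := by rw [← hdec]
      _ = fderiv ℝ f μ₀ (u - c • (fun _ => (1 : ℝ) : Fin n → ℝ))
            + c * fderiv ℝ f μ₀ (fun _ => (1 : ℝ)) := by
          rw [map_add, ContinuousLinearMap.map_smul]; rfl
      _ = 0 := by rw [hdirzero _ hv, hfe]; ring
  refine ⟨μ₀, ?_⟩
  funext i
  have h := hall (Pi.single i 1)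
  rw [hfderiv] at h
  have hLi : L (Pi.single i 1) = x i := by
    rw [hL]
    simp [Pi.single_apply, mul_ite, Finset.sum_ite_eq']
  simp only [grad]
  linarith [h, hLi.symm.le, hLi.le]
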